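/- Let C be a covering system with distinct moduli, all of which are at most B. Let p be a prime and a a positive integer such that p^a(p+1) > B. Then the set obtained from C by discarding all arithmetic progressions whose modulus is divisible by p^a is still a covering system. -/

import Mathlib

/-- A covering system: a finite set of arithmetic progressions, each encoded as a pair
`(a, m)` representing `a mod m = {a + k*m : k ∈ ℤ}` with modulus `m ≥ 1`, such that
every integer belongs to at least one of the progressions. -/
def IsCoveringSystem (C : Finset (ℤ × ℕ)) : Prop :=
  (∀ q ∈ C, 1 ≤ q.2) ∧ ∀ x : ℤ, ∃ q ∈ C, (q.2 : ℤ) ∣ x - q.1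

/-- The moduli of the progressions in `C` are pairwise distinct. -/
def HasDistinctModuli (C : Finset (ℤ × ℕ)) : Prop :=
  ∀ q ∈ C, ∀ r ∈ C, q.2 = r.2 → q = r

lemma pow_dvd_lcm_pair {p k x y : ℕ} (hp : p.Prime) (hx : x ≠ 0) (hy : y ≠ 0)
    (h : p ^ k ∣ Nat.lcm x y) : p ^ k ∣ x ∨ p ^ k ∣ y := by
  rw [hp.pow_dvd_iff_le_factorization (Nat.lcm_ne_zero hx hy),
    Nat.factorization_lcm hx hy, Finsupp.sup_apply, le_sup_iff] at h
  rcases h with h | h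
  · exact Or.inl ((hp.pow_dvd_iff_le_factorization hx).2 h)
  · exact Or.inr ((hp.pow_dvd_iff_le_factorization hy).2 h)

lemma pow_dvd_finset_lcm {p k : ℕ} (hp : p.Prime) (hk : 1 ≤ k)
    {α : Type*} [DecidableEq α] (s : Finset α) (f : α → ℕ) (hf : ∀ i ∈ s, f i ≠ 0)
    (h : p ^ k ∣ s.lcm f) : ∃ i ∈ s, p ^ k ∣ f i := by
  induction s using Finset.induction_on with
  | empty =>
    simp only [Finset.lcm_empty] at h
    have h1 : p ^ k = 1 := Nat.eq_one_of_dvd_one h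
    exact absurd h1 (Nat.one_lt_pow (by omega) hp.one_lt).ne'
  | @insert a s' hx ih =>
    rw [Finset.lcm_insert] at h
    have hs' : s'.lcm f ≠ 0 := by
      intro h0
      rw [Finset.lcm_eq_zero_iff] at h0
      obtain ⟨i, hi, hfi⟩ := h0
      exact hf i (Finset.mem_insert_of_mem hi) hfi
    rcases pow_dvd_lcm_pair hp (hf a (Finset.mem_insert_self a s')) hs' h with h | h
    · exact ⟨a, Finset.mem_insert_self a s', h⟩
    · obtain ⟨i, hi, hd⟩ := ih (fun i hi => hf i (Finset.mem_insert_of_mem hi)) h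
      exact ⟨i, Finset.mem_insert_of_mem hi, hd⟩

/-- If all moduli of a distinct covering system are at most `B`, `p` is prime,
`a ≥ 1`, and `p^a * (p+1) > B`, then discarding all progressions whose modulus is
divisible by `p^a` still leaves a covering system. -/
theorem discard_high_prime_power (C : Finset (ℤ × ℕ))
    (hC : IsCoveringSystem C) (hdist : HasDistinctModuli C)
    (B : ℕ) (hB : ∀ q ∈ C, q.2 ≤ B)
    (p a : ℕ) (hp : p.Prime) (ha : 1 ≤ a) (hpa : B < p ^ a * (p + 1)) :
    IsCoveringSystem (C.filter (fun q => ¬ p ^ a ∣ q.2)) := by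
  obtain ⟨hpos, hcov⟩ := hC
  have hp2 : 2 ≤ p := hp.two_le
  constructor
  · exact fun q hq => hpos q (Finset.mem_filter.1 hq).1
  intro x
  by_contra hcon
  push_neg at hcon
  set K := C.filter (fun q => ¬ p ^ a ∣ q.2) with hKdef
  set M := K.lcm (fun q => q.2) with hMdef
  have hM0 : M ≠ 0 := by
    intro h
    rw [hMdef, Finset.lcm_eq_zero_iff] at h
    obtain ⟨q, hq, hq0⟩ := h
    have h1 := hpos q (Finset.mem_filter.1 hq).1
    omega
  have hMnd : ¬ p ^ a ∣ M := by
    intro h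
    obtain ⟨q, hq, hdvd⟩ := pow_dvd_finset_lcm hp ha K (fun q => q.2)
      (fun q hq => by have h1 := hpos q (Finset.mem_filter.1 hq).1; omega) h
    exact (Finset.mem_filter.1 hq).2 hdvd
  set b := M.factorization p with hbdef
  have hba : b < a := by
    by_contra h
    push_neg at h
    exact hMnd ((hp.pow_dvd_iff_le_factorization hM0).2 h)
  set m := M / p ^ b with hmdef
  have hMeq : p ^ b * m = M := Nat.ordProj_mul_ordCompl_eq_self M p
  have hpm : ¬ p ∣ m := Nat.not_dvd_ordCompl hp hM0
  -- the "small" removed progressions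
  set Rlt := C.filter (fun q => p ^ a ∣ q.2 ∧ ¬ p ^ (a + 1) ∣ q.2) with hRdef
  have hcard : Rlt.card ≤ p - 1 := by
    have h1 : Rlt.card ≤ (Finset.Ico 1 p).card := by
      apply Finset.card_le_card_of_injOn (fun q => q.2 / p ^ a)
      · intro q hq
        obtain ⟨hqC, hdvd, hndvd⟩ := Finset.mem_filter.1 hq
        have hqe : p ^ a * (q.2 / p ^ a) = q.2 := Nat.mul_div_cancel' hdvd
        have h1 := hpos q hqC
        have h2 := hB q hqC
        simp only [Finset.mem_coe, Finset.mem_Ico]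
        constructor
        · rcases Nat.eq_zero_or_pos (q.2 / p ^ a) with h0 | h0
          · rw [h0, Nat.mul_zero] at hqe; omega
          · exact h0
        · by_contra h
          push_neg at h
          rcases eq_or_lt_of_le h with h' | h'
          · apply hndvd
            have he : q.2 = p ^ (a + 1) := by rw [pow_succ, ← hqe, ← h']
            exact he ▸ dvd_refl _
          · have hle : p ^ a * (p + 1) ≤ p ^ a * (q.2 / p ^ a) :=
              Nat.mul_le_mul_left _ (by omega)
            have hcontra : B < q.2 := lt_of_lt_of_le hpa (le_trans hle (le_of_eq hqe))
            omega
      · intro q hq r hr hqr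
        simp only [Finset.mem_coe] at hq hr
        simp only at hqr
        obtain ⟨hqC, hdvdq, _⟩ := Finset.mem_filter.1 hq
        obtain ⟨hrC, hdvdr, _⟩ := Finset.mem_filter.1 hr
        apply hdist q hqC r hrC
        rw [← Nat.mul_div_cancel' hdvdq, ← Nat.mul_div_cancel' hdvdr, hqr]
    simpa using h1
  -- Step 1
  have hstep1 : ∃ j : ℕ, j < p ∧ ∀ q ∈ Rlt, ¬ ((p:ℤ) ^ a ∣ (x + j * p ^ b) - q.1) := by
    by_contra hno
    push_neg at hno
    have hex : ∀ j : ℕ, ∃ q : ℤ × ℕ, j < p → q ∈ Rlt ∧ (p:ℤ) ^ a ∣ (x + j * p ^ b) - q.1 := by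
      intro j
      by_cases hjp : j < p
      · obtain ⟨q, hq, hdq⟩ := hno j hjp
        exact ⟨q, fun _ => ⟨hq, hdq⟩⟩
      · exact ⟨(0, 0), fun h => absurd h hjp⟩
    choose F hF using hex
    have hmaps : ∀ j ∈ Finset.range p, F j ∈ Rlt := fun j hj => (hF j (Finset.mem_range.1 hj)).1
    have hlt : Rlt.card < (Finset.range p).card := by
      rw [Finset.card_range]; omega
    obtain ⟨j₁, hj₁, j₂, hj₂, hne, heq⟩ :=
      Finset.exists_ne_map_eq_of_card_lt_of_maps_to hlt hmaps
    rw [Finset.mem_range] at hj₁ hj₂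
    have d₁ := (hF j₁ hj₁).2
    have d₂ := (hF j₂ hj₂).2
    rw [heq] at d₁
    have hdiff : (p:ℤ) ^ a ∣ ((j₁:ℤ) - j₂) * (p:ℤ) ^ b := by
      have h := dvd_sub d₁ d₂
      have he : (x + j₁ * (p:ℤ) ^ b - (F j₂).1) - (x + j₂ * (p:ℤ) ^ b - (F j₂).1)
          = ((j₁:ℤ) - j₂) * (p:ℤ) ^ b := by ring
      rwa [he] at h
    have hsplit : (p:ℤ) ^ a = (p:ℤ) ^ b * (p:ℤ) ^ (a - b) := by
      rw [← pow_add]; congr 1; omega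
    have hdvd2 : (p:ℤ) ^ (a - b) ∣ (j₁:ℤ) - j₂ := by
      have hb0 : ((p:ℤ) ^ b) ≠ 0 := pow_ne_zero _ (by positivity)
      rw [hsplit, mul_comm ((j₁:ℤ) - (j₂:ℤ)) _] at hdiff
      exact (mul_dvd_mul_iff_left hb0).1 hdiff
    have hple : (p:ℤ) ≤ (p:ℤ) ^ (a - b) := by
      calc (p:ℤ) = (p:ℤ) ^ 1 := (pow_one _).symm
      _ ≤ (p:ℤ) ^ (a - b) := pow_le_pow_right₀ (by exact_mod_cast hp.one_lt.le) (by omega)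
    have habs : |(j₁:ℤ) - j₂| < (p:ℤ) ^ (a - b) := by
      have hlt2 : |(j₁:ℤ) - j₂| < (p:ℤ) := by
        rw [abs_sub_lt_iff]
        constructor <;> omega
      linarith
    have hz := Int.eq_zero_of_abs_lt_dvd hdvd2 habs
    apply hne
    omega
  obtain ⟨j, hj, hd1⟩ := hstep1
  set d : ℤ := x + j * p ^ b with hddef
  -- Step 2
  have hstep2 : ∃ i : ℕ, i ≤ 1 ∧
      ∀ q ∈ C, p ^ (a + 1) ∣ q.2 → ¬ ((p:ℤ) ^ (a + 1) ∣ (d + i * p ^ a) - q.1) := by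
    have huniq : ∀ q ∈ C, p ^ (a + 1) ∣ q.2 → q.2 = p ^ (a + 1) := by
      intro q hq hdvd
      obtain ⟨k, hk⟩ := hdvd
      have h1 := hpos q hq
      have h2 := hB q hq
      have hpp : p ^ a ≤ p ^ (a + 1) := Nat.pow_le_pow_right (by omega) (by omega)
      have hk1 : k = 1 := by
        by_contra hk1
        rcases Nat.lt_or_ge k 1 with h | h
        · have : k = 0 := by omega
          rw [this, Nat.mul_zero] at hk; omega
        · have h2k : 2 ≤ k := by omega
          have hge : p ^ (a + 1) * 2 ≤ p ^ (a + 1) * k := Nat.mul_le_mul_left _ h2k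
          have hlt : p ^ a * (p + 1) ≤ p ^ (a + 1) * 2 := by
            have : p ^ a * (p + 1) = p ^ (a + 1) + p ^ a := by ring
            omega
          omega
      rw [hk, hk1, Nat.mul_one]
    by_contra hno
    push_neg at hno
    obtain ⟨q₀, hq₀C, hq₀d, hq₀dvd⟩ := hno 0 (by norm_num)
    obtain ⟨q₁, hq₁C, hq₁d, hq₁dvd⟩ := hno 1 (by norm_num)
    have heq : q₀ = q₁ := hdist q₀ hq₀C q₁ hq₁C
      (by rw [huniq q₀ hq₀C hq₀d, huniq q₁ hq₁C hq₁d])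
    rw [heq] at hq₀dvd
    push_cast at hq₀dvd hq₁dvd
    have hdvd : (p:ℤ) ^ (a + 1) ∣ (p:ℤ) ^ a := by
      have h := dvd_sub hq₁dvd hq₀dvd
      have he : (d + 1 * (p:ℤ) ^ a - q₁.1) - (d + 0 * (p:ℤ) ^ a - q₁.1) = (p:ℤ) ^ a := by ring
      rwa [he] at h
    have h1 : (p:ℤ) ^ (a + 1) ≤ (p:ℤ) ^ a := Int.le_of_dvd (by positivity) hdvd
    have h2 : (p:ℤ) ^ a < (p:ℤ) ^ (a + 1) :=
      pow_lt_pow_right₀ (by exact_mod_cast hp.one_lt) (by omega)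
    linarith
  obtain ⟨i, hi, hd2⟩ := hstep2
  set c : ℤ := d + i * p ^ a with hcdef
  have hd1' : ∀ q ∈ Rlt, ¬ ((p:ℤ) ^ a ∣ c - q.1) := by
    intro q hq hdvd
    apply hd1 q hq
    have : (p:ℤ) ^ a ∣ c - d := ⟨i, by rw [hcdef]; ring⟩
    have h2 := dvd_sub hdvd this
    simpa using h2
  have hcx : c - x = (p:ℤ) ^ b * (j + i * p ^ (a - b)) := by
    rw [hcdef, hddef]
    have : (p:ℤ) ^ b * (p:ℤ) ^ (a - b) = (p:ℤ) ^ a := by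
      rw [← pow_add]; congr 1; omega
    ring_nf
    nlinarith [this]
  set s : ℤ := j + i * p ^ (a - b) with hsdef
  -- Step 3: CRT
  have hcop : IsCoprime (m : ℤ) ((p : ℤ) ^ (a + 1)) := by
    have h1 : Nat.Coprime m (p ^ (a + 1)) :=
      (Nat.Coprime.pow_right _ (((Nat.Prime.coprime_iff_not_dvd hp).2 hpm).symm))
    have := Nat.isCoprime_iff_coprime.2 h1
    push_cast at this
    exact this
  obtain ⟨u, v, huv⟩ := hcop
  set y : ℤ := x + (M : ℤ) * (u * s) with hydef
  have hMZ : (M : ℤ) = (p:ℤ) ^ b * m := by exact_mod_cast hMeq.symm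
  have hyc : (p:ℤ) ^ (a + 1) ∣ y - c := by
    refine ⟨(p:ℤ) ^ b * s * (-v), ?_⟩
    rw [hydef]
    linear_combination ((p:ℤ) ^ b * s) * huv - hcx + (u * s) * hMZ
  obtain ⟨q, hqC, hqdvd⟩ := hcov y
  by_cases hk : p ^ a ∣ q.2
  · by_cases hk1 : p ^ (a + 1) ∣ q.2
    · apply hd2 q hqC hk1
      have h1 : (p:ℤ) ^ (a + 1) ∣ y - q.1 := by
        refine dvd_trans ?_ hqdvd
        exact_mod_cast Int.natCast_dvd_natCast.2 hk1
      have := dvd_sub h1 hyc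
      simpa using this
    · have hmem : q ∈ Rlt := Finset.mem_filter.2 ⟨hqC, hk, hk1⟩
      apply hd1' q hmem
      have h1 : (p:ℤ) ^ a ∣ y - q.1 := by
        refine dvd_trans ?_ hqdvd
        exact_mod_cast Int.natCast_dvd_natCast.2 hk
      have h2 : (p:ℤ) ^ a ∣ y - c := dvd_trans (pow_dvd_pow _ (by omega)) hyc
      have := dvd_sub h1 h2
      simpa using this
  · have hqK : q ∈ K := Finset.mem_filter.2 ⟨hqC, hk⟩
    apply hcon q hqK
    have h1 : (q.2 : ℤ) ∣ (M : ℤ) := Int.natCast_dvd_natCast.2 (Finset.dvd_lcm hqK)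
    have h2 : (q.2 : ℤ) ∣ y - x := by
      rw [hydef]; simpa using h1.mul_right (u * s)
    have := dvd_sub hqdvd h2
    have he : (y - q.1) - (y - x) = x - q.1 := by ring
    rwa [he] at this
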